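/- arXiv:1804.05678 — 2 statements merged into one kernel-verified Lean document; each statement's English description precedes it below -/
import Mathlib

section
/- Let H be a real Hilbert space, T : H → H bounded self-adjoint positive semidefinite, α > 0, g ∈ H, and φ : H → ℝ convex continuous. Let ū minimize J₀(u) = ½⟨(T+αI)u, u⟩ + ⟨g,u⟩ + φ(u), and let u_ε minimize J_ε(u) = ½⟨(T+αI)u, u⟩ + ⟨g,u⟩ + φ_ε(u), where φ_ε is convex continuous and satisfies 0 ≤ φ_ε(u) - φ(u) ≤ C·ε for all u (with constant C > 0). Then α‖ū - u_ε‖² ≤ C·ε. -/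
open InnerProductSpace Filter Topology

lemma variational_ineq
    {H : Type*} [NormedAddCommGroup H] [InnerProductSpace ℝ H]
    (T : H →L[ℝ] H) (hT_sa : ∀ u v : H, ⟪T u, v⟫_ℝ = ⟪u, T v⟫_ℝ)
    (α : ℝ) (g : H) (φ : H → ℝ) (hφ : ConvexOn ℝ Set.univ φ)
    (J : H → ℝ)
    (hJ : ∀ u : H, J u = (1 / 2) * (⟪T u, u⟫_ℝ + α * ⟪u, u⟫_ℝ) + ⟪g, u⟫_ℝ + φ u)
    (ub : H) (hmin : IsMinOn J Set.univ ub) (v : H) :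
    0 ≤ ⟪T ub, v - ub⟫_ℝ + α * ⟪ub, v - ub⟫_ℝ + ⟪g, v - ub⟫_ℝ + (φ v - φ ub) := by
  set d := v - ub with hd
  set L : ℝ := ⟪T ub, d⟫_ℝ + α * ⟪ub, d⟫_ℝ + ⟪g, d⟫_ℝ + (φ v - φ ub) with hL
  set Q : ℝ := (1 / 2) * (⟪T d, d⟫_ℝ + α * ⟪d, d⟫_ℝ) with hQ
  have key : ∀ t : ℝ, t ∈ Set.Ioc (0:ℝ) 1 → 0 ≤ L + t * Q := by
    intro t ht
    obtain ⟨ht0, ht1⟩ := ht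
    have hconvpt : ub + t • d = (1 - t) • ub + t • v := by
      rw [hd]; module
    have hφt : φ (ub + t • d) ≤ (1 - t) * φ ub + t * φ v := by
      rw [hconvpt]
      exact hφ.2 (Set.mem_univ ub) (Set.mem_univ v) (by linarith) (le_of_lt ht0)
        (by ring)
    have hmin' : J ub ≤ J (ub + t • d) := hmin (Set.mem_univ (ub + t • d))
    rw [hJ, hJ] at hmin'
    have hexp : ⟪T (ub + t • d), ub + t • d⟫_ℝ
        = ⟪T ub, ub⟫_ℝ + 2 * t * ⟪T ub, d⟫_ℝ + t ^ 2 * ⟪T d, d⟫_ℝ := by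
      have hsym : ⟪T d, ub⟫_ℝ = ⟪T ub, d⟫_ℝ := by
        rw [hT_sa d ub, real_inner_comm]
      simp only [map_add, map_smul, inner_add_left, inner_add_right,
        inner_smul_left, inner_smul_right, conj_trivial,
        ContinuousLinearMap.coe_smul', Pi.smul_apply, smul_eq_mul]
      rw [hsym]; ring
    have hexp2 : ⟪ub + t • d, ub + t • d⟫_ℝ
        = ⟪ub, ub⟫_ℝ + 2 * t * ⟪ub, d⟫_ℝ + t ^ 2 * ⟪d, d⟫_ℝ := by
      simp only [inner_add_left, inner_add_right, inner_smul_left,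
        inner_smul_right, conj_trivial]
      rw [real_inner_comm d ub]; ring
    have hexp3 : ⟪g, ub + t • d⟫_ℝ = ⟪g, ub⟫_ℝ + t * ⟪g, d⟫_ℝ := by
      simp [inner_add_right, inner_smul_right]
    rw [hexp, hexp2, hexp3] at hmin'
    have hmain : 0 ≤ t * (L + t * Q) := by
      have : φ (ub + t • d) - φ ub ≤ t * (φ v - φ ub) := by nlinarith [hφt]
      nlinarith [hmin']
    exact (mul_nonneg_iff_of_pos_left ht0).mp hmain
  have htend : Tendsto (fun t : ℝ => L + t * Q) (𝓝[>] (0:ℝ)) (𝓝 L) := by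
    have : Tendsto (fun t : ℝ => L + t * Q) (𝓝 (0:ℝ)) (𝓝 (L + 0 * Q)) := by
      exact (tendsto_const_nhds.add ((continuous_id.mul continuous_const).tendsto 0))
    simpa using this.mono_left nhdsWithin_le_nhds
  have hev : ∀ᶠ t in 𝓝[>] (0:ℝ), 0 ≤ L + t * Q := by
    filter_upwards [Ioc_mem_nhdsGT_of_mem (Set.mem_Ico.mpr ⟨le_refl 0, one_pos⟩)]
      with t ht using key t ht
  exact ge_of_tendsto htend hev

theorem regularization_error_bound
    {H : Type*} [NormedAddCommGroup H] [InnerProductSpace ℝ H] [CompleteSpace H]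
    (T : H →L[ℝ] H) (hT_sa : ∀ u v : H, ⟪T u, v⟫_ℝ = ⟪u, T v⟫_ℝ)
    (hT_pos : ∀ u : H, 0 ≤ ⟪T u, u⟫_ℝ)
    (α : ℝ) (hα : 0 < α) (g : H)
    (φ φε : H → ℝ) (hφ_conv : ConvexOn ℝ Set.univ φ) (hφ_cont : Continuous φ)
    (hφε_conv : ConvexOn ℝ Set.univ φε) (hφε_cont : Continuous φε)
    (C ε : ℝ) (hC : 0 < C) (hε : 0 < ε)
    (hdiff : ∀ u : H, 0 ≤ φε u - φ u ∧ φε u - φ u ≤ C * ε)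
    (J₀ Jε : H → ℝ)
    (hJ₀ : ∀ u : H, J₀ u = (1 / 2) * (⟪T u, u⟫_ℝ + α * ⟪u, u⟫_ℝ) + ⟪g, u⟫_ℝ + φ u)
    (hJε : ∀ u : H, Jε u = (1 / 2) * (⟪T u, u⟫_ℝ + α * ⟪u, u⟫_ℝ) + ⟪g, u⟫_ℝ + φε u)
    (ubar uε : H) (hubar : IsMinOn J₀ Set.univ ubar) (huε : IsMinOn Jε Set.univ uε) :
    α * ‖ubar - uε‖ ^ 2 ≤ C * ε := by
  have h1 := variational_ineq T hT_sa α g φ hφ_conv J₀ hJ₀ ubar hubar uε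
  have h2 := variational_ineq T hT_sa α g φε hφε_conv Jε hJε uε huε ubar
  set d := uε - ubar with hd
  have hrev : ubar - uε = -d := by rw [hd]; abel
  have hTd : ⟪T (ubar - uε), d⟫_ℝ = -⟪T d, d⟫_ℝ := by
    rw [hrev, map_neg]; simp [inner_neg_left]
  have hid : ⟪ubar - uε, d⟫_ℝ = -⟪d, d⟫_ℝ := by
    rw [hrev]; simp [inner_neg_left]
  rw [hrev] at h2
  have hTsub : ⟪T uε, -d⟫_ℝ = -⟪T uε, d⟫_ℝ := by simp
  have hnorm : ‖ubar - uε‖ ^ 2 = ⟪d, d⟫_ℝ := by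
    rw [hrev, norm_neg, ← real_inner_self_eq_norm_sq]
  have hTee : ⟪T uε, d⟫_ℝ - ⟪T ubar, d⟫_ℝ = ⟪T d, d⟫_ℝ := by
    rw [hd, map_sub]; simp [inner_sub_left]
  have hiee : ⟪uε, d⟫_ℝ - ⟪ubar, d⟫_ℝ = ⟪d, d⟫_ℝ := by
    rw [hd, ← inner_sub_left]
  have hTpos := hT_pos d
  have hd1 := (hdiff ubar).2
  have hd2 := (hdiff uε).1
  simp only [inner_neg_right] at h2
  rw [hnorm]
  nlinarith [h1, h2]
end

section
/- For real λ ≥ 0 and α > 0, and for the diagonal case: if the self-adjoint operator S = (D + UΛU*)⁻¹ with D ⪰ αI, Λ = diag(λᵢ) with λᵢ ≥ 0 and U* U = I, then S ⪯ D⁻¹ - D⁻¹ U diag(αλᵢ/(λᵢ+α)) U* D⁻¹. In the scalar version: for any d ≥ α > 0 and λ ≥ 0, (d + λ)⁻¹ ≤ d⁻¹ - d⁻² · αλ/(λ + α). -/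
open InnerProductSpace

/-- Operator upper bound on `S = (D + UΛU*)⁻¹` via Sherman–Morrison–Woodbury,
with `UΛU*` given by an orthonormal family `u i` and nonnegative eigenvalues `λ i`,
together with its scalar version. -/
theorem lowrank_inverse_upper_bound
    {H : Type*} [NormedAddCommGroup H] [InnerProductSpace ℝ H] [CompleteSpace H]
    {n : Type*} [Fintype n]
    (u : n → H) (hu : Orthonormal ℝ u)
    (lam : n → ℝ) (hlam : ∀ i, 0 ≤ lam i)
    (α : ℝ) (hα : 0 < α)
    (D D' : H →L[ℝ] H)
    (hD_sa : ∀ x y : H, ⟪D x, y⟫_ℝ = ⟪x, D y⟫_ℝ)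
    (hD_coercive : ∀ x : H, α * ‖x‖ ^ 2 ≤ ⟪D x, x⟫_ℝ)
    (hDD' : D ∘L D' = ContinuousLinearMap.id ℝ H)
    (hD'D : D' ∘L D = ContinuousLinearMap.id ℝ H)
    (A S : H →L[ℝ] H)
    (hA : ∀ x : H, A x = D x + ∑ i, (lam i * ⟪u i, x⟫_ℝ) • u i)
    (hAS : A ∘L S = ContinuousLinearMap.id ℝ H)
    (hSA : S ∘L A = ContinuousLinearMap.id ℝ H) :
    (∀ x : H, ⟪S x, x⟫_ℝ ≤
        ⟪D' x, x⟫_ℝ - ∑ i, (α * lam i / (lam i + α)) * ⟪u i, D' x⟫_ℝ ^ 2) ∧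
    (∀ d lam₀ : ℝ, α ≤ d → 0 ≤ lam₀ →
        (d + lam₀)⁻¹ ≤ d⁻¹ - d⁻¹ ^ 2 * (α * lam₀ / (lam₀ + α))) := by
  constructor
  · intro x
    set y := S x with hy
    set z := D' x with hz
    have hAy : A y = x := by
      have := congrArg (fun f : H →L[ℝ] H => f x) hAS
      simpa using this
    have hDz : D z = x := by
      have := congrArg (fun f : H →L[ℝ] H => f x) hDD'
      simpa using this
    set b : n → ℝ := fun i => ⟪u i, y⟫_ℝ with hb
    set w : H := z - y with hw
    set a : n → ℝ := fun i => ⟪u i, w⟫_ℝ with ha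
    have hx : x = D y + ∑ i, (lam i * b i) • u i := by rw [← hAy, hA y]
    have hDw : D w = ∑ i, (lam i * b i) • u i := by
      rw [hw, map_sub, hDz]
      rw [hx]; abel
    have key1 : ⟪D w, y⟫_ℝ = ∑ i, lam i * b i ^ 2 := by
      rw [hDw, sum_inner]
      refine Finset.sum_congr rfl fun i _ => ?_
      rw [real_inner_smul_left]; ring
    have key2 : ⟪D w, w⟫_ℝ = ∑ i, lam i * b i * a i := by
      rw [hDw, sum_inner]
      refine Finset.sum_congr rfl fun i _ => ?_
      rw [real_inner_smul_left]
    have hzw : ∀ i, ⟪u i, z⟫_ℝ = a i + b i := by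
      intro i
      simp [ha, hw, hb, inner_sub_right]
    have E1 : ⟪y, x⟫_ℝ = ⟪D y, y⟫_ℝ + ∑ i, lam i * b i ^ 2 := by
      rw [hx, inner_add_right, inner_sum, real_inner_comm y (D y)]
      congr 1
      refine Finset.sum_congr rfl fun i _ => ?_
      rw [real_inner_smul_right, real_inner_comm (u i) y]
      have hbi : ⟪u i, y⟫_ℝ = b i := rfl
      rw [hbi]; ring
    have E2 : ⟪z, x⟫_ℝ = ⟪D y, y⟫_ℝ + 2 * (∑ i, lam i * b i ^ 2) + ⟪D w, w⟫_ℝ := by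
      have hzyw : z = y + w := by rw [hw]; abel
      have hwy : ⟪w, D y⟫_ℝ = ⟪D w, y⟫_ℝ := (hD_sa w y).symm
      have hyDw : ⟪y, D w⟫_ℝ = ⟪D w, y⟫_ℝ := real_inner_comm (D w) y
      have hwDw : ⟪w, D w⟫_ℝ = ⟪D w, w⟫_ℝ := real_inner_comm (D w) w
      have hyDy : ⟪y, D y⟫_ℝ = ⟪D y, y⟫_ℝ := real_inner_comm (D y) y
      calc ⟪z, x⟫_ℝ = ⟪y + w, D y + D w⟫_ℝ := by
            rw [← hDz, hzyw, map_add]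
        _ = ⟪y, D y⟫_ℝ + ⟪y, D w⟫_ℝ + (⟪w, D y⟫_ℝ + ⟪w, D w⟫_ℝ) := by
            rw [inner_add_left, inner_add_right, inner_add_right]
        _ = ⟪D y, y⟫_ℝ + 2 * (∑ i, lam i * b i ^ 2) + ⟪D w, w⟫_ℝ := by
            rw [hwy, hyDw, hwDw, hyDy, key1]; ring
    have E4 : α * ∑ i, a i ^ 2 ≤ ⟪D w, w⟫_ℝ := by
      have hBessel : ∑ i, a i ^ 2 ≤ ‖w‖ ^ 2 := by
        have := hu.sum_inner_products_le (s := Finset.univ) w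
        simpa [ha, Real.norm_eq_abs, sq_abs] using this
      calc α * ∑ i, a i ^ 2 ≤ α * ‖w‖ ^ 2 := by
            exact mul_le_mul_of_nonneg_left hBessel hα.le
        _ ≤ ⟪D w, w⟫_ℝ := hD_coercive w
    have E3 : ∑ i, (α * lam i / (lam i + α)) * ⟪u i, z⟫_ℝ ^ 2
        ≤ α * (∑ i, a i ^ 2) + ∑ i, lam i * b i ^ 2 := by
      rw [Finset.mul_sum, ← Finset.sum_add_distrib]
      refine Finset.sum_le_sum fun i _ => ?_
      rw [hzw i]
      have hpos : 0 < lam i + α := by have := hlam i; linarith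
      rw [div_mul_eq_mul_div, div_le_iff₀ hpos]
      nlinarith [sq_nonneg (α * a i - lam i * b i), hlam i, hα.le,
        sq_nonneg (a i + b i), mul_nonneg (hlam i) hα.le]
    have hLHS : ⟪S x, x⟫_ℝ = ⟪y, x⟫_ℝ := by rw [hy]
    have hRHS : ⟪D' x, x⟫_ℝ = ⟪z, x⟫_ℝ := by rw [hz]
    rw [hLHS, hRHS, E1, E2]
    have : ∑ i, (α * lam i / (lam i + α)) * ⟪u i, D' x⟫_ℝ ^ 2
        = ∑ i, (α * lam i / (lam i + α)) * ⟪u i, z⟫_ℝ ^ 2 := by rw [hz]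
    rw [this]
    linarith [E3, E4]
  · intro d l hd hl
    have hd0 : 0 < d := lt_of_lt_of_le hα hd
    have h1 : 0 < d + l := by linarith
    have h2 : 0 < l + α := by linarith
    have key : d⁻¹ - d⁻¹ ^ 2 * (α * l / (l + α)) - (d + l)⁻¹
        = l * l * (d - α) / (d ^ 2 * (d + l) * (l + α)) := by
      field_simp
      ring
    have hnn : 0 ≤ l * l * (d - α) / (d ^ 2 * (d + l) * (l + α)) := by
      apply div_nonneg
      · nlinarith
      · positivity
    linarith [key ▸ hnn]
end
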